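/- Let Ω ⊂ ℝⁿ be a convex open set, let u : Ω → ℝ be twice differentiable, and suppose the concavity function C_u attains a local maximum at an interior point (x₁, x₃, λ) ∈ Ω × Ω × (0,1), with x₂ := λx₃ + (1−λ)x₁ ∈ Ω. Then for every symmetric positive semidefinite n×n real matrix A = (a^{ij}) one has ∑_{i,j=1}^n a^{ij} ( D²_{ij}u(x₂) − λ D²_{ij}u(x₃) − (1−λ) D²_{ij}u(x₁) ) ≤ 0, where D²_{ij}u denotes the second partial derivatives of u. -/

import Mathlib

open Set Filter Topology

/-- The second partial derivative `D²_{ij} u (x)`. -/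
noncomputable def secondPartial {n : ℕ} (u : EuclideanSpace ℝ (Fin n) → ℝ)
    (x : EuclideanSpace ℝ (Fin n)) (i j : Fin n) : ℝ :=
  fderiv ℝ (fun y => fderiv ℝ u y (EuclideanSpace.single j 1)) x (EuclideanSpace.single i 1)

private lemma secondDerivTest (f f' : ℝ → ℝ) (c : ℝ)
    (hf : ∀ᶠ t in 𝓝 (0:ℝ), HasDerivAt f (f' t) t)
    (hf' : HasDerivAt f' c 0)
    (hmax : IsLocalMax f (0:ℝ)) : c ≤ 0 := by
  by_contra hc
  push_neg at hc
  have h0 : f' 0 = 0 := hmax.hasDerivAt_eq_zero hf.self_of_nhds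
  have hs : Tendsto (fun t => f' t / t) (𝓝[≠] (0:ℝ)) (𝓝 c) := by
    have h1 := hasDerivAt_iff_tendsto_slope.mp hf'
    have heq : slope f' 0 = fun t => f' t / t := by
      funext t
      simp [slope_def_field, h0]
    rwa [heq] at h1
  have hpos : ∀ᶠ t in 𝓝[>] (0:ℝ), 0 < f' t := by
    have h2 : ∀ᶠ t in 𝓝[≠] (0:ℝ), c/2 < f' t / t :=
      hs.eventually (eventually_gt_nhds (by linarith))
    have h3 : ∀ᶠ t in 𝓝[>] (0:ℝ), c/2 < f' t / t :=
      h2.filter_mono (nhdsWithin_mono _ (fun t ht => ne_of_gt ht))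
    filter_upwards [h3, self_mem_nhdsWithin] with t ht ht0
    have h4 : 0 < f' t / t := lt_trans (by linarith) ht
    have h5 := mul_pos h4 ht0
    rwa [div_mul_cancel₀ _ (ne_of_gt ht0)] at h5
  obtain ⟨δ₁, hδ₁, H1⟩ := Metric.eventually_nhds_iff.mp (hf.and hmax)
  obtain ⟨δ₂, hδ₂, hsub⟩ := mem_nhdsGT_iff_exists_Ioo_subset.mp hpos
  have hδ₂' : (0:ℝ) < δ₂ := mem_Ioi.mp hδ₂
  set ε := min (δ₁/2) (δ₂/2) with hε
  have hεpos : 0 < ε := lt_min (by linarith) (by linarith)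
  have hdist : ∀ t : ℝ, t ∈ Icc 0 ε → dist t 0 < δ₁ := by
    intro t ht
    rw [Real.dist_eq, sub_zero, abs_of_nonneg ht.1]
    calc t ≤ ε := ht.2
    _ ≤ δ₁/2 := min_le_left _ _
    _ < δ₁ := by linarith
  have hmono : StrictMonoOn f (Icc 0 ε) := by
    apply strictMonoOn_of_deriv_pos (convex_Icc _ _)
    · intro t ht
      exact ((H1 (hdist t ht)).1.differentiableAt.continuousAt).continuousWithinAt
    · intro t ht
      rw [interior_Icc] at ht
      have hd := (H1 (hdist t ⟨le_of_lt ht.1, le_of_lt ht.2⟩)).1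
      rw [hd.deriv]
      refine hsub ⟨ht.1, ?_⟩
      calc t < ε := ht.2
      _ ≤ δ₂/2 := min_le_right _ _
      _ < δ₂ := by linarith
  have h5 : f 0 < f ε :=
    hmono (left_mem_Icc.mpr (le_of_lt hεpos)) (right_mem_Icc.mpr (le_of_lt hεpos)) hεpos
  have h6 : f ε ≤ f 0 := (H1 (hdist ε (right_mem_Icc.mpr (le_of_lt hεpos)))).2
  linarith

private lemma lineHasDerivAt {n : ℕ} (u : EuclideanSpace ℝ (Fin n) → ℝ)
    (x v : EuclideanSpace ℝ (Fin n)) (t : ℝ)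
    (hd : DifferentiableAt ℝ u (x + t • v)) :
    HasDerivAt (fun s : ℝ => u (x + s • v)) (fderiv ℝ u (x + t • v) v) t := by
  have hL : HasDerivAt (fun s : ℝ => x + s • v) v t := by
    simpa using ((hasDerivAt_id t).smul_const v).const_add x
  exact hd.hasFDerivAt.comp_hasDerivAt t hL

private lemma lineHasDerivAt2 {n : ℕ} (u : EuclideanSpace ℝ (Fin n) → ℝ)
    (x v : EuclideanSpace ℝ (Fin n))
    (hd : DifferentiableAt ℝ (fderiv ℝ u) x) :
    HasDerivAt (fun s : ℝ => fderiv ℝ u (x + s • v) v) (fderiv ℝ (fderiv ℝ u) x v v) (0:ℝ) := by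
  have hL : HasDerivAt (fun s : ℝ => x + s • v) v (0:ℝ) := by
    simpa using ((hasDerivAt_id (0:ℝ)).smul_const v).const_add x
  have hx0 : HasFDerivAt (fderiv ℝ u) (fderiv ℝ (fderiv ℝ u) x) (x + (0:ℝ) • v) := by
    rw [show x + (0:ℝ) • v = x by simp]
    exact hd.hasFDerivAt
  have h1 : HasDerivAt (fun s : ℝ => fderiv ℝ u (x + s • v)) (fderiv ℝ (fderiv ℝ u) x v) (0:ℝ) :=
    hx0.comp_hasDerivAt (0:ℝ) hL
  have h2 := h1.clm_apply (hasDerivAt_const (0:ℝ) v)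
  simpa using h2

private lemma secondPartial_eq {n : ℕ} (u : EuclideanSpace ℝ (Fin n) → ℝ)
    (x : EuclideanSpace ℝ (Fin n)) (i j : Fin n)
    (hd : DifferentiableAt ℝ (fderiv ℝ u) x) :
    secondPartial u x i j
      = fderiv ℝ (fderiv ℝ u) x (EuclideanSpace.single i 1) (EuclideanSpace.single j 1) := by
  unfold secondPartial
  have h := ((ContinuousLinearMap.apply ℝ ℝ (EuclideanSpace.single j (1:ℝ))).hasFDerivAt.comp
    x hd.hasFDerivAt).fderiv
  simp only [Function.comp_def, ContinuousLinearMap.apply_apply] at h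
  rw [h]
  rfl

private lemma quad_expand {n : ℕ} (u : EuclideanSpace ℝ (Fin n) → ℝ)
    (x v : EuclideanSpace ℝ (Fin n))
    (hd : DifferentiableAt ℝ (fderiv ℝ u) x) :
    fderiv ℝ (fderiv ℝ u) x v v = ∑ i, ∑ j, v i * v j * secondPartial u x i j := by
  have hv : v = ∑ i, v i • EuclideanSpace.single i (1:ℝ) := by
    have h := (EuclideanSpace.basisFun (Fin n) ℝ).sum_repr v
    simp only [EuclideanSpace.basisFun_repr, EuclideanSpace.basisFun_apply] at h
    exact h.symm
  set T := fderiv ℝ (fderiv ℝ u) x with hT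
  have step : ∀ (W : EuclideanSpace ℝ (Fin n) →L[ℝ] ℝ),
      W v = ∑ j, v j * W (EuclideanSpace.single j 1) := by
    intro W
    conv_lhs => rw [hv]
    rw [map_sum]
    exact Finset.sum_congr rfl fun j _ => by rw [map_smul, smul_eq_mul]
  have hTv : T v = ∑ i, v i • T (EuclideanSpace.single i 1) := by
    conv_lhs => rw [hv]
    rw [map_sum]
    exact Finset.sum_congr rfl fun i _ => map_smul T _ _
  calc T v v = ∑ i, v i * T (EuclideanSpace.single i 1) v := by
        rw [hTv, ContinuousLinearMap.sum_apply]
        exact Finset.sum_congr rfl fun i _ => by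
          rw [ContinuousLinearMap.smul_apply, smul_eq_mul]
    _ = ∑ i, v i * ∑ j, v j * T (EuclideanSpace.single i 1) (EuclideanSpace.single j 1) := by
        exact Finset.sum_congr rfl fun i _ => by rw [step]
    _ = ∑ i, ∑ j, v i * v j * secondPartial u x i j := by
        refine Finset.sum_congr rfl fun i _ => ?_
        rw [Finset.mul_sum]
        refine Finset.sum_congr rfl fun j _ => ?_
        rw [secondPartial_eq u x i j hd, hT]
        ring

private lemma tendstoLine {n : ℕ} (x v : EuclideanSpace ℝ (Fin n)) :
    Filter.Tendsto (fun t : ℝ => x + t • v) (𝓝 0) (𝓝 x) := by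
  have hcont : Continuous (fun t : ℝ => x + t • v) :=
    continuous_const.add (continuous_id.smul continuous_const)
  have h := hcont.tendsto 0
  simpa using h

theorem stmt1 {n : ℕ} (Ω : Set (EuclideanSpace ℝ (Fin n)))
    (hΩo : IsOpen Ω) (hΩc : Convex ℝ Ω)
    (u : EuclideanSpace ℝ (Fin n) → ℝ)
    (hu : DifferentiableOn ℝ u Ω) (hu2 : DifferentiableOn ℝ (fderiv ℝ u) Ω)
    (x₁ x₃ : EuclideanSpace ℝ (Fin n)) (lam : ℝ)
    (hx₁ : x₁ ∈ Ω) (hx₃ : x₃ ∈ Ω) (hlam : lam ∈ Ioo (0 : ℝ) 1)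
    (hx₂ : lam • x₃ + (1 - lam) • x₁ ∈ Ω)
    (hmax : IsLocalMax
      (fun p : EuclideanSpace ℝ (Fin n) × EuclideanSpace ℝ (Fin n) × ℝ =>
        u (p.2.2 • p.2.1 + (1 - p.2.2) • p.1) - p.2.2 * u p.2.1 - (1 - p.2.2) * u p.1)
      (x₁, x₃, lam))
    (A : Matrix (Fin n) (Fin n) ℝ) (hA : A.PosSemidef) :
    ∑ i, ∑ j, A i j *
        (secondPartial u (lam • x₃ + (1 - lam) • x₁) i j
          - lam * secondPartial u x₃ i j - (1 - lam) * secondPartial u x₁ i j) ≤ 0 := by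
  set x₂ : EuclideanSpace ℝ (Fin n) := lam • x₃ + (1 - lam) • x₁ with hx₂def
  -- differentiability at the three points
  have hdAt : ∀ x ∈ Ω, DifferentiableAt ℝ u x :=
    fun x hx => (hu x hx).differentiableAt (hΩo.mem_nhds hx)
  have hd2At : ∀ x ∈ Ω, DifferentiableAt ℝ (fderiv ℝ u) x :=
    fun x hx => (hu2 x hx).differentiableAt (hΩo.mem_nhds hx)
  -- the quadratic-form inequality
  have key : ∀ v : EuclideanSpace ℝ (Fin n),
      ∑ i, ∑ j, v i * v j * (secondPartial u x₂ i j
        - lam * secondPartial u x₃ i j - (1 - lam) * secondPartial u x₁ i j) ≤ 0 := by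
    intro v
    have hmem : ∀ x ∈ Ω, ∀ᶠ t : ℝ in 𝓝 0, x + t • v ∈ Ω := by
      intro x hx
      exact (tendstoLine x v).eventually (hΩo.eventually_mem hx)
    set f : ℝ → ℝ := fun t =>
      u (x₂ + t • v) - lam * u (x₃ + t • v) - (1 - lam) * u (x₁ + t • v) with hfdef
    set f' : ℝ → ℝ := fun t =>
      fderiv ℝ u (x₂ + t • v) v - lam * fderiv ℝ u (x₃ + t • v) v
        - (1 - lam) * fderiv ℝ u (x₁ + t • v) v with hf'def
    have hderiv : ∀ᶠ t in 𝓝 (0:ℝ), HasDerivAt f (f' t) t := by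
      filter_upwards [hmem x₂ hx₂, hmem x₃ hx₃, hmem x₁ hx₁] with t h2 h3 h1
      exact ((lineHasDerivAt u x₂ v t (hdAt _ h2)).sub
        ((lineHasDerivAt u x₃ v t (hdAt _ h3)).const_mul lam)).sub
        ((lineHasDerivAt u x₁ v t (hdAt _ h1)).const_mul (1 - lam))
    have hderiv' : HasDerivAt f'
        (fderiv ℝ (fderiv ℝ u) x₂ v v - lam * fderiv ℝ (fderiv ℝ u) x₃ v v
          - (1 - lam) * fderiv ℝ (fderiv ℝ u) x₁ v v) 0 :=
      ((lineHasDerivAt2 u x₂ v (hd2At _ hx₂)).sub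
        ((lineHasDerivAt2 u x₃ v (hd2At _ hx₃)).const_mul lam)).sub
        ((lineHasDerivAt2 u x₁ v (hd2At _ hx₁)).const_mul (1 - lam))
    have hkey : ∀ t : ℝ, lam • (x₃ + t • v) + (1 - lam) • (x₁ + t • v) = x₂ + t • v := by
      intro t
      rw [hx₂def]
      module
    have hflocmax : IsLocalMax f 0 := by
      have hg : Tendsto (fun t : ℝ => ((x₁ + t • v, x₃ + t • v, lam) :
          EuclideanSpace ℝ (Fin n) × EuclideanSpace ℝ (Fin n) × ℝ)) (𝓝 0) (𝓝 (x₁, x₃, lam)) := by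
        rw [show 𝓝 ((x₁, x₃, lam) : EuclideanSpace ℝ (Fin n) × EuclideanSpace ℝ (Fin n) × ℝ)
          = (𝓝 x₁) ×ˢ ((𝓝 x₃) ×ˢ (𝓝 lam)) by rw [nhds_prod_eq, nhds_prod_eq]]
        exact (tendstoLine x₁ v).prodMk ((tendstoLine x₃ v).prodMk tendsto_const_nhds)
      have hev := hg.eventually hmax
      filter_upwards [hev] with t ht
      show f t ≤ f 0
      have h0 : f 0 = u x₂ - lam * u x₃ - (1 - lam) * u x₁ := by simp [hfdef]
      have h1 : f t = u (x₂ + t • v) - lam * u (x₃ + t • v) - (1 - lam) * u (x₁ + t • v) := rfl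
      rw [h1, h0, ← hkey t]
      rw [hx₂def]
      exact ht
    have hc0 := secondDerivTest f f' _ hderiv hderiv' hflocmax
    calc ∑ i, ∑ j, v i * v j * (secondPartial u x₂ i j
          - lam * secondPartial u x₃ i j - (1 - lam) * secondPartial u x₁ i j)
        = fderiv ℝ (fderiv ℝ u) x₂ v v - lam * fderiv ℝ (fderiv ℝ u) x₃ v v
          - (1 - lam) * fderiv ℝ (fderiv ℝ u) x₁ v v := by
          rw [quad_expand u x₂ v (hd2At _ hx₂), quad_expand u x₃ v (hd2At _ hx₃),
            quad_expand u x₁ v (hd2At _ hx₁)]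
          simp only [Finset.mul_sum, ← Finset.sum_sub_distrib]
          refine Finset.sum_congr rfl fun i _ => ?_
          refine Finset.sum_congr rfl fun j _ => ?_
          ring
      _ ≤ 0 := hc0
  -- trace argument via A = Bᴴ B
  obtain ⟨B, hB⟩ : ∃ B : Matrix (Fin n) (Fin n) ℝ, A = B.conjTranspose * B := by
    open scoped MatrixOrder in
    obtain ⟨B, rfl⟩ := CStarAlgebra.nonneg_iff_eq_star_mul_self.mp hA.nonneg
    exact ⟨B, rfl⟩
  have hAij : ∀ i j, A i j = ∑ k, B k i * B k j := by
    intro i j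
    rw [hB]
    simp [Matrix.mul_apply, Matrix.conjTranspose_apply]
  calc ∑ i, ∑ j, A i j * (secondPartial u x₂ i j
        - lam * secondPartial u x₃ i j - (1 - lam) * secondPartial u x₁ i j)
      = ∑ k, ∑ i, ∑ j, (B k i * B k j) * (secondPartial u x₂ i j
        - lam * secondPartial u x₃ i j - (1 - lam) * secondPartial u x₁ i j) := by
        simp only [hAij, Finset.sum_mul]
        rw [show (∑ i, ∑ j, ∑ k, (B k i * B k j) * (secondPartial u x₂ i j
            - lam * secondPartial u x₃ i j - (1 - lam) * secondPartial u x₁ i j))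
          = ∑ i, ∑ k, ∑ j, (B k i * B k j) * (secondPartial u x₂ i j
            - lam * secondPartial u x₃ i j - (1 - lam) * secondPartial u x₁ i j) from
          Finset.sum_congr rfl fun i _ => Finset.sum_comm]
        exact Finset.sum_comm
    _ ≤ 0 := by
        refine Finset.sum_nonpos fun k _ => ?_
        have hk := key ((WithLp.equiv 2 (Fin n → ℝ)).symm (fun i => B k i))
        simpa [WithLp.equiv_symm_apply] using hk
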